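/- Let m ≥ 2. Then for every i ∈ [m]: E[ Σ_{j=1}^i p_{π(j)} ] = i/m, and E[ ( Σ_{j=1}^i p_{π(j)} − i/m )² ] = (i/m) σ(p)² + ( i(i−1)/(m(m−1)) ) (1 − σ(p)²) − i²/m², and this quantity is at most (i/m) σ(p)². -/

import Mathlib

open Finset

private lemma exists_perm_two {α : Type*} [DecidableEq α] {a b c d : α}
    (hab : a ≠ b) (hcd : c ≠ d) :
    ∃ σ : Equiv.Perm α, σ a = c ∧ σ b = d := by
  refine ⟨Equiv.swap (Equiv.swap a c b) d * Equiv.swap a c, ?_, ?_⟩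
  · simp only [Equiv.Perm.mul_apply, Equiv.swap_apply_left]
    apply Equiv.swap_apply_of_ne_of_ne
    · intro h
      exact hab ((Equiv.swap a c).injective ((Equiv.swap_apply_left a c).trans h))
    · exact hcd
  · simp [Equiv.Perm.mul_apply]

private lemma sum_perm_apply_eq {m : ℕ} (f : Fin m → ℝ) (j j' : Fin m) :
    ∑ π : Equiv.Perm (Fin m), f (π j) = ∑ π : Equiv.Perm (Fin m), f (π j') := by
  have h := Equiv.sum_comp (Equiv.mulRight (Equiv.swap j j'))
      (fun π : Equiv.Perm (Fin m) => f (π j))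
  simpa [Equiv.Perm.mul_apply] using h.symm

private lemma sum_perm_single {m : ℕ} (hm : 1 ≤ m) (f : Fin m → ℝ) (j : Fin m) :
    ∑ π : Equiv.Perm (Fin m), f (π j) = (m.factorial : ℝ) / m * ∑ v, f v := by
  have hm0 : (m : ℝ) ≠ 0 := Nat.cast_ne_zero.mpr (by omega)
  have key : (m : ℝ) * ∑ π : Equiv.Perm (Fin m), f (π j)
      = (m.factorial : ℝ) * ∑ v, f v := by
    calc (m : ℝ) * ∑ π : Equiv.Perm (Fin m), f (π j)
        = ∑ j' : Fin m, ∑ π : Equiv.Perm (Fin m), f (π j') := by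
          rw [Finset.sum_congr rfl (fun j' _ => (sum_perm_apply_eq f j' j))]
          simp [Finset.sum_const, Fintype.card_fin, nsmul_eq_mul]
      _ = ∑ π : Equiv.Perm (Fin m), ∑ j' : Fin m, f (π j') := Finset.sum_comm
      _ = ∑ _π : Equiv.Perm (Fin m), ∑ v, f v :=
          Finset.sum_congr rfl (fun π _ => Equiv.sum_comp π f)
      _ = (m.factorial : ℝ) * ∑ v, f v := by
          simp [Finset.sum_const, Fintype.card_perm, Fintype.card_fin, nsmul_eq_mul]
  field_simp
  linarith [key]

private lemma sum_perm_pair_eq {m : ℕ} (f g : Fin m → ℝ) {j k j' k' : Fin m}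
    (h1 : j ≠ k) (h2 : j' ≠ k') :
    ∑ π : Equiv.Perm (Fin m), f (π j) * g (π k)
      = ∑ π : Equiv.Perm (Fin m), f (π j') * g (π k') := by
  obtain ⟨σ, hσ1, hσ2⟩ := exists_perm_two h2 h1
  have h := Equiv.sum_comp (Equiv.mulRight σ)
      (fun π : Equiv.Perm (Fin m) => f (π j') * g (π k'))
  simpa [Equiv.Perm.mul_apply, hσ1, hσ2] using h

private lemma sum_offDiag_mul {m : ℕ} (F G : Fin m → ℝ) :
    ∑ q ∈ (univ : Finset (Fin m)).offDiag, F q.1 * G q.2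
      = (∑ v, F v) * (∑ v, G v) - ∑ v, F v * G v := by
  have h := Finset.sum_union (f := fun q : Fin m × Fin m => F q.1 * G q.2)
      (Finset.disjoint_diag_offDiag (univ : Finset (Fin m)))
  rw [Finset.diag_union_offDiag] at h
  have hprod : ∑ q ∈ (univ : Finset (Fin m)) ×ˢ univ, F q.1 * G q.2
      = (∑ v, F v) * (∑ v, G v) := by
    rw [Finset.sum_product, Finset.sum_mul_sum]
  have hdiag : ∑ q ∈ (univ : Finset (Fin m)).diag, F q.1 * G q.2 = ∑ v, F v * G v :=
    Finset.sum_diag _ _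
  rw [hprod, hdiag] at h
  linarith

private lemma sum_perm_pair {m : ℕ} (hm : 2 ≤ m) (f g : Fin m → ℝ) {j k : Fin m}
    (hjk : j ≠ k) :
    ∑ π : Equiv.Perm (Fin m), f (π j) * g (π k)
      = (m.factorial : ℝ) / ((m : ℝ) * ((m : ℝ) - 1)) *
        ((∑ v, f v) * (∑ v, g v) - ∑ v, f v * g v) := by
  have hcard : ((univ : Finset (Fin m)).offDiag.card : ℝ) = (m : ℝ) * ((m : ℝ) - 1) := by
    rw [Finset.offDiag_card]
    have h1 : m ≤ m * m := Nat.le_mul_of_pos_left m (by omega)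
    simp only [Finset.card_univ, Fintype.card_fin]
    push_cast [h1]
    ring
  have hne : ((m : ℝ) * ((m : ℝ) - 1)) ≠ 0 := by
    have h2 : (2 : ℝ) ≤ (m : ℝ) := by exact_mod_cast hm
    nlinarith
  have key : ((m : ℝ) * ((m : ℝ) - 1)) * ∑ π : Equiv.Perm (Fin m), f (π j) * g (π k)
      = (m.factorial : ℝ) * ((∑ v, f v) * (∑ v, g v) - ∑ v, f v * g v) := by
    calc ((m : ℝ) * ((m : ℝ) - 1)) * ∑ π : Equiv.Perm (Fin m), f (π j) * g (π k)
        = ∑ q ∈ (univ : Finset (Fin m)).offDiag,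
            ∑ π : Equiv.Perm (Fin m), f (π q.1) * g (π q.2) := by
          rw [Finset.sum_congr rfl
            (fun q hq => sum_perm_pair_eq f g (Finset.mem_offDiag.mp hq).2.2 hjk)]
          rw [Finset.sum_const, nsmul_eq_mul, hcard]
      _ = ∑ π : Equiv.Perm (Fin m), ∑ q ∈ (univ : Finset (Fin m)).offDiag,
            f (π q.1) * g (π q.2) := Finset.sum_comm
      _ = ∑ _π : Equiv.Perm (Fin m), ((∑ v, f v) * (∑ v, g v) - ∑ v, f v * g v) := by
          refine Finset.sum_congr rfl (fun π _ => ?_)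
          have h1 := sum_offDiag_mul (fun v => f (π v)) (fun v => g (π v))
          rw [h1, Equiv.sum_comp π f, Equiv.sum_comp π g,
            Equiv.sum_comp π (fun v => f v * g v)]
      _ = (m.factorial : ℝ) * ((∑ v, f v) * (∑ v, g v) - ∑ v, f v * g v) := by
          simp [Finset.sum_const, Fintype.card_perm, Fintype.card_fin, nsmul_eq_mul]
          ring
  rw [div_mul_eq_mul_div, eq_div_iff hne]
  linarith [key]

private lemma card_filter_lt {m i : ℕ} (him : i ≤ m) :
    ((univ : Finset (Fin m)).filter (fun j : Fin m => (j : ℕ) < i)).card = i := by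
  have heq : (univ : Finset (Fin m)).filter (fun j : Fin m => (j : ℕ) < i)
      = Finset.attachFin (Finset.range i)
        (fun v hv => lt_of_lt_of_le (Finset.mem_range.mp hv) him) := by
    ext j
    simp [Finset.mem_attachFin]
  rw [heq, Finset.card_attachFin, Finset.card_range]

set_option maxHeartbeats 1000000 in
/-- Let `π` be a uniformly random permutation of `[m]`, `m ≥ 2`, and `p` a
probability mass function on `[m]`.  For `i ∈ [m]`, with `S(π) = Σ_{j=1}^i p_{π(j)}`:
`E[S] = i/m`; `E[(S − i/m)²] = (i/m)σ(p)² + (i(i−1)/(m(m−1)))(1 − σ(p)²) − i²/m²`; and this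
quantity is at most `(i/m)σ(p)²`.  Expectations under the uniform distribution on permutations
are written as averages over all permutations. -/
theorem stmt3 (m : ℕ) (hm : 2 ≤ m) (p : Fin m → ℝ)
    (hp : ∀ v, 0 < p v) (hsum : ∑ v, p v = 1)
    (i : ℕ) (hi1 : 1 ≤ i) (him : i ≤ m) :
    (((∑ π : Equiv.Perm (Fin m),
        ∑ j ∈ Finset.univ.filter (fun j : Fin m => (j : ℕ) < i), p (π j)) /
        (Fintype.card (Equiv.Perm (Fin m)) : ℝ)) = (i : ℝ) / m) ∧
    (((∑ π : Equiv.Perm (Fin m),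
        ((∑ j ∈ Finset.univ.filter (fun j : Fin m => (j : ℕ) < i), p (π j)) - (i : ℝ) / m) ^ 2) /
        (Fintype.card (Equiv.Perm (Fin m)) : ℝ))
      = ((i : ℝ) / m) * (∑ v, (p v) ^ 2)
        + (((i : ℝ) * ((i : ℝ) - 1)) / ((m : ℝ) * ((m : ℝ) - 1))) * (1 - ∑ v, (p v) ^ 2)
        - (i : ℝ) ^ 2 / (m : ℝ) ^ 2) ∧
    (((∑ π : Equiv.Perm (Fin m),
        ((∑ j ∈ Finset.univ.filter (fun j : Fin m => (j : ℕ) < i), p (π j)) - (i : ℝ) / m) ^ 2) /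
        (Fintype.card (Equiv.Perm (Fin m)) : ℝ))
      ≤ ((i : ℝ) / m) * (∑ v, (p v) ^ 2)) := by
  set F : Finset (Fin m) := Finset.univ.filter (fun j : Fin m => (j : ℕ) < i) with hFdef
  have hF : F.card = i := card_filter_lt him
  have hm1 : 1 ≤ m := by omega
  have hmR : (2 : ℝ) ≤ (m : ℝ) := by exact_mod_cast hm
  have hiR : (1 : ℝ) ≤ (i : ℝ) := by exact_mod_cast hi1
  have himR : (i : ℝ) ≤ (m : ℝ) := by exact_mod_cast him
  have hm0 : (m : ℝ) ≠ 0 := by linarith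
  have hm10 : (m : ℝ) - 1 ≠ 0 := by linarith
  have hN : (Fintype.card (Equiv.Perm (Fin m)) : ℝ) = (m.factorial : ℝ) := by
    rw [Fintype.card_perm, Fintype.card_fin]
  have hN0 : (m.factorial : ℝ) ≠ 0 :=
    Nat.cast_ne_zero.mpr (Nat.factorial_ne_zero m)
  set S2 : ℝ := ∑ v, (p v) ^ 2 with hS2def
  set N : ℝ := (m.factorial : ℝ) with hNdef
  -- square-sum rewrite
  have hpp : ∑ v, p v * p v = S2 := by
    simp [hS2def, sq]
  -- first moment
  have hA : ∑ π : Equiv.Perm (Fin m), ∑ j ∈ F, p (π j) = (i : ℝ) * (N / m) := by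
    rw [Finset.sum_comm]
    rw [Finset.sum_congr rfl (fun j _ => sum_perm_single hm1 p j)]
    rw [hsum, Finset.sum_const, hF, nsmul_eq_mul]
    ring
  -- second moment (raw)
  have hB : ∑ π : Equiv.Perm (Fin m), (∑ j ∈ F, p (π j)) ^ 2
      = (i : ℝ) * (N / m * S2)
        + ((i : ℝ) ^ 2 - i) * (N / ((m : ℝ) * ((m : ℝ) - 1)) * (1 - S2)) := by
    have hsq : ∀ π : Equiv.Perm (Fin m), (∑ j ∈ F, p (π j)) ^ 2
        = (∑ q ∈ F.diag, p (π q.1) * p (π q.2))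
          + ∑ q ∈ F.offDiag, p (π q.1) * p (π q.2) := by
      intro π
      rw [sq, Finset.sum_mul_sum, ← Finset.sum_product',
        ← Finset.diag_union_offDiag F, Finset.sum_union (Finset.disjoint_diag_offDiag F)]
    rw [Finset.sum_congr rfl (fun π _ => hsq π), Finset.sum_add_distrib]
    have hdiagpart : ∑ π : Equiv.Perm (Fin m), ∑ q ∈ F.diag, p (π q.1) * p (π q.2)
        = (i : ℝ) * (N / m * S2) := by
      have : ∀ π : Equiv.Perm (Fin m), ∑ q ∈ F.diag, p (π q.1) * p (π q.2)
          = ∑ j ∈ F, (fun v => p v ^ 2) (π j) := by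
        intro π
        rw [Finset.sum_diag]
        exact Finset.sum_congr rfl (fun j _ => by simp [sq])
      rw [Finset.sum_congr rfl (fun π _ => this π), Finset.sum_comm]
      rw [Finset.sum_congr rfl (fun j _ => sum_perm_single hm1 (fun v => p v ^ 2) j)]
      rw [Finset.sum_const, hF, nsmul_eq_mul]
    have hoffpart : ∑ π : Equiv.Perm (Fin m), ∑ q ∈ F.offDiag, p (π q.1) * p (π q.2)
        = ((i : ℝ) ^ 2 - i) * (N / ((m : ℝ) * ((m : ℝ) - 1)) * (1 - S2)) := by
      rw [Finset.sum_comm]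
      have heach : ∀ q ∈ F.offDiag, ∑ π : Equiv.Perm (Fin m), p (π q.1) * p (π q.2)
          = N / ((m : ℝ) * ((m : ℝ) - 1)) * (1 - S2) := by
        intro q hq
        rw [sum_perm_pair hm p p (Finset.mem_offDiag.mp hq).2.2, hsum, hpp, one_mul]
      rw [Finset.sum_congr rfl heach, Finset.sum_const, Finset.offDiag_card, hF, nsmul_eq_mul]
      have hii : i ≤ i * i := Nat.le_mul_of_pos_left i (by omega)
      have : ((i * i - i : ℕ) : ℝ) = (i : ℝ) ^ 2 - i := by
        push_cast [hii]; ring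
      rw [this]
    rw [hdiagpart, hoffpart]
  -- part 1
  have part1 : (∑ π : Equiv.Perm (Fin m), ∑ j ∈ F, p (π j)) /
      (Fintype.card (Equiv.Perm (Fin m)) : ℝ) = (i : ℝ) / m := by
    rw [hN, hA]
    field_simp
  -- expansion of centered second moment
  have hexp : ∑ π : Equiv.Perm (Fin m), ((∑ j ∈ F, p (π j)) - (i : ℝ) / m) ^ 2
      = (∑ π : Equiv.Perm (Fin m), (∑ j ∈ F, p (π j)) ^ 2)
        - 2 * ((i : ℝ) / m) * (∑ π : Equiv.Perm (Fin m), ∑ j ∈ F, p (π j))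
        + N * ((i : ℝ) / m) ^ 2 := by
    have : ∀ π : Equiv.Perm (Fin m), ((∑ j ∈ F, p (π j)) - (i : ℝ) / m) ^ 2
        = (∑ j ∈ F, p (π j)) ^ 2 - 2 * ((i : ℝ) / m) * (∑ j ∈ F, p (π j))
          + ((i : ℝ) / m) ^ 2 := by intro π; ring
    rw [Finset.sum_congr rfl (fun π _ => this π), Finset.sum_add_distrib,
      Finset.sum_sub_distrib, ← Finset.mul_sum, Finset.sum_const]
    simp [nsmul_eq_mul, Finset.card_univ, Fintype.card_perm, Fintype.card_fin, hNdef]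
  have part2 : (∑ π : Equiv.Perm (Fin m),
        ((∑ j ∈ F, p (π j)) - (i : ℝ) / m) ^ 2) /
        (Fintype.card (Equiv.Perm (Fin m)) : ℝ)
      = ((i : ℝ) / m) * S2
        + (((i : ℝ) * ((i : ℝ) - 1)) / ((m : ℝ) * ((m : ℝ) - 1))) * (1 - S2)
        - (i : ℝ) ^ 2 / (m : ℝ) ^ 2 := by
    rw [hN, hexp, hB, hA]
    field_simp
    ring
  refine ⟨part1, part2, ?_⟩
  rw [part2]
  -- Cauchy–Schwarz: 1 ≤ m * S2
  have hCS : 1 ≤ (m : ℝ) * S2 := by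
    have h := Finset.sum_mul_sq_le_sq_mul_sq Finset.univ (fun _ : Fin m => (1 : ℝ)) p
    simpa [hsum, hS2def, Finset.sum_const, Fintype.card_fin, nsmul_eq_mul] using h
  have key : (((i : ℝ) * ((i : ℝ) - 1)) / ((m : ℝ) * ((m : ℝ) - 1))) * (1 - S2)
      ≤ (i : ℝ) ^ 2 / (m : ℝ) ^ 2 := by
    rw [div_mul_eq_mul_div, div_le_div_iff₀ (by nlinarith) (by positivity)]
    have h1 : 0 ≤ ((i : ℝ) * ((i : ℝ) - 1) * m) * ((m : ℝ) * S2 - 1) := by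
      apply mul_nonneg
      · apply mul_nonneg (mul_nonneg (by linarith) (by linarith)) (by linarith)
      · linarith
    have h2 : 0 ≤ (i : ℝ) * ((m : ℝ) * ((m : ℝ) - 1)) := by
      apply mul_nonneg (by linarith)
      apply mul_nonneg (by linarith) (by linarith)
    nlinarith [h1, h2, sq_nonneg ((i:ℝ) - m)]
  linarith
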